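/- Let P be a probability measure on {0,1}×ℝ^p with p₀ = P({0}×ℝ^p) ∈ (0,1) and conditional distributions P₀, P₁ on ℝ^p (P₀(B) = P({0}×B)/p₀, P₁(B) = P({1}×B)/(1−p₀)). Then for every classifier g and every α ∈ (0,1), the trimmed classification error admits the representation R_α(g) = min over q₀ with 1 − (1−p₀)/(1−α) ≤ q₀ ≤ p₀/(1−α) of [ (q₀ − (p₀/(1−α)) P₀({x : g(x)=0}))_+ + (1 − q₀ − ((1−p₀)/(1−α)) P₁({x : g(x)=1}))_+ ]. -/

import Mathlib

open MeasureTheory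

noncomputable section

/-- The set of `α`-trimmed versions of a measure `μ`. -/
def trimmedSet {Ω : Type*} [MeasurableSpace Ω] (μ : Measure Ω) (α : ℝ) :
    Set (Measure Ω) :=
  {ν | IsProbabilityMeasure ν ∧ ν ≪ μ ∧
    ∀ᵐ z ∂μ, ν.rnDeriv μ z ≤ ENNReal.ofReal (1 / (1 - α))}

/-- The trimmed classification error `R_α(g) = inf_{Q ∈ 𝓡_α(P)} Q(g(x) ≠ y)`. -/
def trimmedErr {p : ℕ} (P : Measure (Bool × (Fin p → ℝ))) (α : ℝ)
    (g : (Fin p → ℝ) → Bool) : ℝ :=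
  sInf ((fun Q => (Q {z | g z.2 ≠ z.1}).toReal) '' trimmedSet P α)

/-- The class-conditional distribution of the features given label `b`:
`condMeasure P b (B) = P({b} × B) / P({b} × ℝ^p)`. -/
def condMeasure {p : ℕ} (P : Measure (Bool × (Fin p → ℝ))) (b : Bool) :
    Measure (Fin p → ℝ) :=
  (P {z | z.1 = b})⁻¹ • Measure.map Prod.snd (P.restrict {z | z.1 = b})

/-- Lemma 2: the trimmed classification error is the minimum over the mixture weight
`q₀` ranging in `[1 − (1−p₀)/(1−α), p₀/(1−α)]` of
`(q₀ − (p₀/(1−α)) P₀(g=0))_+ + (1 − q₀ − ((1−p₀)/(1−α)) P₁(g=1))_+`.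
The label `0` is encoded by `false` and `1` by `true`. -/
theorem trimmedErr_eq_min_over_q0 {p : ℕ}
    (P : Measure (Bool × (Fin p → ℝ))) [IsProbabilityMeasure P]
    (hp₀ : (P {z | z.1 = false}).toReal ∈ Set.Ioo (0 : ℝ) 1)
    {α : ℝ} (hα : α ∈ Set.Ioo (0 : ℝ) 1)
    {g : (Fin p → ℝ) → Bool} (hg : Measurable g) :
    trimmedErr P α g =
      sInf ((fun q₀ =>
          max (q₀ - ((P {z | z.1 = false}).toReal / (1 - α)) *
              (condMeasure P false {x | g x = false}).toReal) 0 +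
          max (1 - q₀ - ((1 - (P {z | z.1 = false}).toReal) / (1 - α)) *
              (condMeasure P true {x | g x = true}).toReal) 0) ''
        Set.Icc (1 - (1 - (P {z | z.1 = false}).toReal) / (1 - α))
          ((P {z | z.1 = false}).toReal / (1 - α))) := by
  classical
  obtain ⟨hpF0, hpF1⟩ := hp₀
  obtain ⟨hα0, hα1⟩ := hα
  have hr0 : (0:ℝ) < 1 - α := by linarith
  -- sets
  set F : Set (Bool × (Fin p → ℝ)) := {z | z.1 = false} with hFdef
  set F' : Set (Bool × (Fin p → ℝ)) := {z | z.1 = true} with hF'def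
  have hF : MeasurableSet F := measurable_fst (measurableSet_singleton false)
  have hF' : MeasurableSet F' := measurable_fst (measurableSet_singleton true)
  have hF'c : F' = Fᶜ := by
    ext ⟨b, x⟩
    cases b <;> simp [hFdef, hF'def]
  have hGf : MeasurableSet {x : Fin p → ℝ | g x = false} :=
    hg (measurableSet_singleton false)
  have hGt : MeasurableSet {x : Fin p → ℝ | g x = true} :=
    hg (measurableSet_singleton true)
  set A : Set (Bool × (Fin p → ℝ)) := {z | g z.2 = false} ∩ F with hAdef
  set C : Set (Bool × (Fin p → ℝ)) := {z | g z.2 = true} ∩ F' with hCdef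
  have hAm : MeasurableSet A := ((hg.comp measurable_snd) (measurableSet_singleton false)).inter hF
  have hCm : MeasurableSet C := ((hg.comp measurable_snd) (measurableSet_singleton true)).inter hF'
  set Ec : Set (Bool × (Fin p → ℝ)) := A ∪ C with hEcdef
  have hEc : MeasurableSet Ec := hAm.union hCm
  have hEset : {z : Bool × (Fin p → ℝ) | g z.2 ≠ z.1} = Ecᶜ := by
    ext ⟨b, x⟩
    cases b <;> cases hgx : g x <;>
      simp [hEcdef, hAdef, hCdef, hFdef, hF'def, hgx]
  have hdisj : Disjoint A C :=
    Disjoint.mono Set.inter_subset_right Set.inter_subset_right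
      (hF'c ▸ disjoint_compl_right)
  have hPEc : P Ec = P A + P C := measure_union hdisj hCm
  -- real abbreviations
  set pF : ℝ := (P F).toReal with hpF
  set pA : ℝ := (P A).toReal with hpA
  set pC : ℝ := (P C).toReal with hpC
  -- the constant c
  set c : ENNReal := ENNReal.ofReal (1 / (1 - α)) with hcdef
  have hc1 : (1:ENNReal) ≤ c := ENNReal.one_le_ofReal.mpr (one_le_one_div hr0 (by linarith))
  have hc_ne_top : c ≠ ⊤ := ENNReal.ofReal_ne_top
  have hc_toReal : c.toReal = 1 / (1 - α) := ENNReal.toReal_ofReal (by positivity)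
  have hcm : (c * P Ec).toReal = (pA + pC) / (1 - α) := by
    rw [ENNReal.toReal_mul, hc_toReal, hPEc,
      ENNReal.toReal_add (measure_ne_top _ _) (measure_ne_top _ _), ← hpA, ← hpC]
    ring
  have hcm_ne_top : c * P Ec ≠ ⊤ := ENNReal.mul_ne_top hc_ne_top (measure_ne_top _ _)
  -- the target value
  set T : ℝ := max (1 - (pA + pC) / (1 - α)) 0 with hT
  -- generic bound for trimmed measures
  have hQle : ∀ Q ∈ trimmedSet P α, ∀ S : Set (Bool × (Fin p → ℝ)),
      MeasurableSet S → Q S ≤ c * P S := by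
    rintro Q ⟨hQp, hac, hbd⟩ S hS
    haveI : IsProbabilityMeasure Q := hQp
    have hQd : Q S = ∫⁻ z in S, Q.rnDeriv P z ∂P := by
      conv_lhs => rw [← @Measure.withDensity_rnDeriv_eq _ _ Q P (Measure.haveLebesgueDecomposition_of_sigmaFinite (μ := Q) (ν := P)) hac]
      exact withDensity_apply _ hS
    rw [hQd, ← hcdef] at *
    calc ∫⁻ z in S, Q.rnDeriv P z ∂P ≤ ∫⁻ _ in S, c ∂P := by
          refine lintegral_mono_ae (ae_restrict_of_ae ?_)
          rw [hcdef]
          exact hbd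
      _ = c * P S := setLIntegral_const S c
  -- lower bound for all trimmed measures
  have hlow : ∀ Q ∈ trimmedSet P α, T ≤ (Q Ecᶜ).toReal := by
    intro Q hQ
    haveI : IsProbabilityMeasure Q := hQ.1
    have h1 : Q Ec ≤ c * P Ec := hQle Q hQ Ec hEc
    have h2 : (Q Ec).toReal ≤ (pA + pC) / (1 - α) := by
      have := ENNReal.toReal_mono hcm_ne_top h1
      rwa [hcm] at this
    have h3 : (Q Ec).toReal + (Q Ecᶜ).toReal = 1 := by
      have h := measure_add_measure_compl (μ := Q) hEc
      rw [measure_univ] at h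
      have h' := congrArg ENNReal.toReal h
      rwa [ENNReal.toReal_add (measure_ne_top _ _) (measure_ne_top _ _),
        ENNReal.toReal_one] at h'
    exact max_le (by linarith) ENNReal.toReal_nonneg
  -- construction of the optimal trimmed measure
  set d₁ : ENNReal := if P Ec = 0 then 0 else min (c * P Ec) 1 / P Ec with hd1
  set d₂ : ENNReal := if P Ecᶜ = 0 then 0 else (1 - c * P Ec) / P Ecᶜ with hd2
  set f : Bool × (Fin p → ℝ) → ENNReal := Ec.piecewise (fun _ => d₁) (fun _ => d₂) with hfdef
  have hfm : Measurable f := Measurable.piecewise hEc measurable_const measurable_const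
  set Q0 : Measure (Bool × (Fin p → ℝ)) := P.withDensity f with hQ0def
  have hfEc : ∀ z : Bool × (Fin p → ℝ), z ∈ Ec → f z = d₁ := fun z hz =>
    Set.piecewise_eq_of_mem Ec (fun _ => d₁) (fun _ => d₂) hz
  have hfEcc : ∀ z : Bool × (Fin p → ℝ), z ∈ Ecᶜ → f z = d₂ := fun z hz =>
    Set.piecewise_eq_of_notMem Ec (fun _ => d₁) (fun _ => d₂) hz
  have hQ0Ec : Q0 Ec = min (c * P Ec) 1 := by
    rw [hQ0def, withDensity_apply _ hEc,
      setLIntegral_congr_fun hEc hfEc,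
      setLIntegral_const]
    by_cases h : P Ec = 0
    · simp [hd1, h]
    · rw [hd1, if_neg h]
      exact ENNReal.div_mul_cancel h (measure_ne_top _ _)
  have hQ0Ecc : Q0 Ecᶜ = 1 - c * P Ec := by
    rw [hQ0def, withDensity_apply _ hEc.compl,
      setLIntegral_congr_fun hEc.compl hfEcc,
      setLIntegral_const]
    by_cases h : P Ecᶜ = 0
    · have hm1 : P Ec = 1 := by
        have h2 := measure_add_measure_compl (μ := P) hEc
        rw [measure_univ, h, add_zero] at h2
        exact h2
      rw [h, mul_zero, hm1, mul_one]
      exact (tsub_eq_zero_of_le hc1).symm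
    · rw [hd2, if_neg h]
      exact ENNReal.div_mul_cancel h (measure_ne_top _ _)
  have hQ0prob : IsProbabilityMeasure Q0 := by
    constructor
    rw [← measure_add_measure_compl (μ := Q0) hEc, hQ0Ec, hQ0Ecc]
    rcases le_total (c * P Ec) 1 with h | h
    · rw [min_eq_left h]
      exact add_tsub_cancel_of_le h
    · rw [min_eq_right h, tsub_eq_zero_of_le h, add_zero]
  have hfle : ∀ z, f z ≤ c := by
    intro z
    rw [hfdef]
    by_cases hz : z ∈ Ec
    · rw [Set.piecewise_eq_of_mem _ _ _ hz, hd1]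
      split_ifs with h
      · exact zero_le
      · exact ENNReal.div_le_of_le_mul (min_le_left _ _)
    · rw [Set.piecewise_eq_of_notMem _ _ _ hz, hd2]
      split_ifs with h
      · exact zero_le
      · refine ENNReal.div_le_of_le_mul ?_
        rw [tsub_le_iff_right]
        calc (1:ENNReal) ≤ c := hc1
          _ = c * (P Ec + P Ecᶜ) := by
              rw [measure_add_measure_compl hEc, measure_univ, mul_one]
          _ = c * P Ecᶜ + c * P Ec := by ring
  have hQ0mem : Q0 ∈ trimmedSet P α := by
    refine ⟨hQ0prob, by rw [hQ0def]; exact withDensity_absolutelyContinuous _ _, ?_⟩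
    filter_upwards [Measure.rnDeriv_withDensity P hfm] with z hz
    rw [← hQ0def] at hz
    rw [hz, ← hcdef]
    exact hfle z
  have hQ0E : (Q0 Ecᶜ).toReal = T := by
    rw [hQ0Ecc]
    rcases le_total (c * P Ec) 1 with h | h
    · rw [ENNReal.toReal_sub_of_le h ENNReal.one_ne_top, ENNReal.toReal_one, hcm, hT]
      rw [max_eq_left]
      have := ENNReal.toReal_mono ENNReal.one_ne_top h
      rw [hcm, ENNReal.toReal_one] at this
      linarith
    · rw [tsub_eq_zero_of_le h]
      have := ENNReal.toReal_mono hcm_ne_top h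
      rw [hcm, ENNReal.toReal_one] at this
      rw [hT, max_eq_right (by linarith)]
      simp
  -- left-hand side
  have hLHS : trimmedErr P α g = T := by
    unfold trimmedErr
    rw [hEset]
    apply le_antisymm
    · exact csInf_le ⟨T, by rintro x ⟨Q, hQ, rfl⟩; exact hlow Q hQ⟩ ⟨Q0, hQ0mem, hQ0E⟩
    · exact le_csInf ⟨_, ⟨Q0, hQ0mem, rfl⟩⟩ (by rintro x ⟨Q, hQ, rfl⟩; exact hlow Q hQ)
  -- conditional measure computations
  have hpF_ne : pF ≠ 0 := ne_of_gt hpF0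
  have hcondF : pF / (1 - α) * (condMeasure P false {x | g x = false}).toReal
      = pA / (1 - α) := by
    have h1 : condMeasure P false {x | g x = false} = (P F)⁻¹ * P A := by
      simp only [condMeasure]
      rw [Measure.smul_apply, smul_eq_mul,
        Measure.map_apply measurable_snd hGf, Measure.restrict_apply (measurable_snd hGf)]
      rfl
    rw [h1, ENNReal.toReal_mul, ENNReal.toReal_inv, ← hpF, ← hpA]
    field_simp
  have hPF' : (P F').toReal = 1 - pF := by
    have h1 : P F' = 1 - P F := by
      rw [hF'c, measure_compl hF (measure_ne_top _ _), measure_univ]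
    rw [h1, ENNReal.toReal_sub_of_le prob_le_one ENNReal.one_ne_top, ENNReal.toReal_one, hpF]
  have hcondT : (1 - pF) / (1 - α) * (condMeasure P true {x | g x = true}).toReal
      = pC / (1 - α) := by
    have h1 : condMeasure P true {x | g x = true} = (P F')⁻¹ * P C := by
      simp only [condMeasure]
      rw [Measure.smul_apply, smul_eq_mul,
        Measure.map_apply measurable_snd hGt, Measure.restrict_apply (measurable_snd hGt)]
      rfl
    rw [h1, ENNReal.toReal_mul, ENNReal.toReal_inv, hPF']
    have h2 : (1:ℝ) - pF ≠ 0 := by linarith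
    field_simp
    ring
  rw [hLHS]
  simp only [hcondF, hcondT]
  -- right-hand side
  set L : ℝ := 1 - (1 - pF) / (1 - α) with hL
  set U : ℝ := pF / (1 - α) with hU
  have hApF : pA ≤ pF :=
    ENNReal.toReal_mono (measure_ne_top _ _) (measure_mono Set.inter_subset_right)
  have hCpF : pC ≤ 1 - pF := by
    have := ENNReal.toReal_mono (measure_ne_top P F')
      (measure_mono (Set.inter_subset_right : C ⊆ F'))
    rwa [hPF'] at this
  have hLU : L ≤ U := by
    have h1 : (1:ℝ) ≤ 1 / (1 - α) := one_le_one_div hr0 (by linarith)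
    have h2 : (1 - pF) / (1 - α) + pF / (1 - α) = 1 / (1 - α) := by
      rw [← add_div, sub_add_cancel]
    rw [hL, hU]
    linarith
  set qs : ℝ := max L (pA / (1 - α)) with hqs
  have hdivA : pA / (1 - α) ≤ U := by rw [hU]; gcongr
  have hqsmem : qs ∈ Set.Icc L U := ⟨le_max_left _ _, max_le hLU hdivA⟩
  have hVqs : max (qs - pA / (1 - α)) 0 + max (1 - qs - pC / (1 - α)) 0 = T := by
    rcases le_total L (pA / (1 - α)) with h | h
    · rw [hqs, max_eq_right h]
      have h2 : 1 - pA / (1 - α) - pC / (1 - α) = 1 - (pA + pC) / (1 - α) := by ring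
      rw [sub_self, h2, hT]
      simp
    · rw [hqs, max_eq_left h]
      have h3 : 0 ≤ 1 - L - pC / (1 - α) := by
        have h4 : pC / (1 - α) ≤ (1 - pF) / (1 - α) := by gcongr
        rw [hL]
        linarith
      have h4 : 0 ≤ L - pA / (1 - α) := by linarith
      have h5 : 1 - (pA + pC) / (1 - α)
          = (L - pA / (1 - α)) + (1 - L - pC / (1 - α)) := by ring
      rw [max_eq_left h4, max_eq_left h3, hT, max_eq_left (by linarith)]
      linarith
  have hVlow : ∀ q : ℝ,
      T ≤ max (q - pA / (1 - α)) 0 + max (1 - q - pC / (1 - α)) 0 := by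
    intro q
    have h1 := le_max_left (q - pA / (1 - α)) (0:ℝ)
    have h2 := le_max_left (1 - q - pC / (1 - α)) (0:ℝ)
    have h3 := le_max_right (q - pA / (1 - α)) (0:ℝ)
    have h4 := le_max_right (1 - q - pC / (1 - α)) (0:ℝ)
    have h5 : 1 - (pA + pC) / (1 - α)
        = (q - pA / (1 - α)) + (1 - q - pC / (1 - α)) := by ring
    rw [hT]
    exact max_le (by linarith) (by linarith)
  apply le_antisymm
  · exact le_csInf ⟨_, ⟨qs, hqsmem, rfl⟩⟩ (by rintro x ⟨q, hq, rfl⟩; exact hVlow q)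
  · exact csInf_le ⟨T, by rintro x ⟨q, hq, rfl⟩; exact hVlow q⟩ ⟨qs, hqsmem, hVqs⟩

end
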